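/- Let $H$ be a connected graph on $[n]$. Then $c_{W(H)}(T) = |T| + 1$ for all $T \in \mathcal{C}(W(H))$ (i.e., the binomial edge ideal of the whisker graph $W(H)$ is unmixed) if and only if $H$ is a complete graph. Moreover, when $H$ is complete, for every nonempty $T \in \mathcal{C}(W(H))$ one has $T \subseteq [n]$, $T \neq [n]$, and $c_{W(H)}(T) = |T| + 1$. -/

import Mathlib

open SimpleGraph Set

/-- Number of connected components of the induced subgraph of `G` on `s`. -/
noncomputable def nc {V : Type*} (G : SimpleGraph V) (s : Set V) : ℕ :=
  Nat.card (G.induce s).ConnectedComponent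

/-- `T` has the cut point property for `G`: every `i ∈ T` is a cut point of the
induced subgraph on `Tᶜ ∪ {i}` (removing `i` increases the number of components). -/
def CutPointProperty {V : Type*} (G : SimpleGraph V) (T : Set V) : Prop :=
  ∀ i ∈ T, nc G (Tᶜ ∪ {i}) < nc G Tᶜ

/-- The join `G₁ * G₂` of two graphs on disjoint vertex sets. -/
def joinGraph {V₁ V₂ : Type*} (G₁ : SimpleGraph V₁) (G₂ : SimpleGraph V₂) :
    SimpleGraph (V₁ ⊕ V₂) where
  Adj v w :=
    match v, w with
    | Sum.inl a, Sum.inl b => G₁.Adj a b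
    | Sum.inr a, Sum.inr b => G₂.Adj a b
    | Sum.inl _, Sum.inr _ => True
    | Sum.inr _, Sum.inl _ => True
  symm := by constructor; rintro (a | a) (b | b) h <;> simp_all <;> exact h.symm
  loopless := by constructor; rintro (a | a) h <;> simp_all

/-- Disjoint union of an indexed family of graphs. -/
def sigmaGraph {ι : Type*} {V : ι → Type*} (G : ∀ i, SimpleGraph (V i)) :
    SimpleGraph (Σ i, V i) where
  Adj v w := ∃ h : v.1 = w.1, (G w.1).Adj (h ▸ v.2) w.2
  symm := by
    constructor
    rintro ⟨i, a⟩ ⟨j, b⟩ ⟨h, hab⟩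
    dsimp at h hab ⊢
    subst h
    exact ⟨rfl, hab.symm⟩
  loopless := by
    constructor
    rintro ⟨i, a⟩ ⟨h, hab⟩
    dsimp at h hab
    exact (G i).irrefl hab
/-- The corona `H ⊙ H'`: one copy of `H'` for each vertex `v` of `H`,
with every vertex of the copy joined to `v`. -/
def coronaGraph {V₁ V₂ : Type*} (H : SimpleGraph V₁) (H' : SimpleGraph V₂) :
    SimpleGraph (V₁ ⊕ V₁ × V₂) where
  Adj v w :=
    match v, w with
    | Sum.inl a, Sum.inl b => H.Adj a b
    | Sum.inl a, Sum.inr p => a = p.1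
    | Sum.inr p, Sum.inl b => p.1 = b
    | Sum.inr p, Sum.inr q => p.1 = q.1 ∧ H'.Adj p.2 q.2
  symm := by
    constructor
    rintro (a | p) (b | q) h <;> dsimp at h ⊢
    · exact h.symm
    · exact h.symm
    · exact h.symm
    · exact ⟨h.1.symm, h.2.symm⟩
  loopless := by constructor; rintro (a | p) h <;> simp_all

/-- The whisker graph `W(H)`: a pendant vertex attached to each vertex of `H`. -/
def whiskerGraph {V : Type*} (H : SimpleGraph V) : SimpleGraph (V ⊕ V) where
  Adj v w :=
    match v, w with
    | Sum.inl a, Sum.inl b => H.Adj a b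
    | Sum.inl a, Sum.inr b => a = b
    | Sum.inr a, Sum.inl b => a = b
    | Sum.inr _, Sum.inr _ => False
  symm := by constructor; rintro (a | a) (b | b) h <;> simp_all; exact h.symm
  loopless := by constructor; rintro (a | a) h <;> simp_all

/-- `F` is (the vertex set of) a maximal clique of `G`. -/
def MaxClique {V : Type*} (G : SimpleGraph V) (F : Set V) : Prop :=
  Maximal G.IsClique F

/-- A graph is chordal if every cycle of length at least 4 has a chord. -/
def IsChordal {V : Type*} (G : SimpleGraph V) : Prop :=
  ∀ (n : ℕ), 4 ≤ n → ∀ c : ℕ → V, Set.InjOn c (Set.Iio n) →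
    (∀ i < n, G.Adj (c i) (c ((i + 1) % n))) →
    ∃ i < n, ∃ j < n, j ≠ i ∧ j ≠ (i + 1) % n ∧ i ≠ (j + 1) % n ∧ G.Adj (c i) (c j)

/-- A generalized block graph: a connected chordal graph in which any three distinct
maximal cliques with nonempty common intersection have all pairwise intersections equal. -/
def GenBlockGraph {V : Type*} (G : SimpleGraph V) : Prop :=
  G.Connected ∧ IsChordal G ∧
    ∀ F₁ F₂ F₃ : Set V, MaxClique G F₁ → MaxClique G F₂ → MaxClique G F₃ →
      F₁ ≠ F₂ → F₁ ≠ F₃ → F₂ ≠ F₃ → (F₁ ∩ F₂ ∩ F₃).Nonempty →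
      F₁ ∩ F₂ = F₁ ∩ F₃ ∧ F₁ ∩ F₂ = F₂ ∩ F₃

/-- `A` is a cut set of `G`: deleting `A` increases the number of connected components. -/
def IsCutSet {V : Type*} (G : SimpleGraph V) (A : Set V) : Prop :=
  nc G Set.univ < nc G Aᶜ

/-- `A` is an inclusion-minimal cut set of `G`. -/
def IsMinCutSet {V : Type*} (G : SimpleGraph V) (A : Set V) : Prop :=
  IsCutSet G A ∧ ∀ B ⊂ A, ¬ IsCutSet G B

/-- `A` is a `t`-minimal cut set of `G`: a minimal cut set which is the common
intersection of exactly `t` maximal cliques of `G` and disjoint from all other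
maximal cliques. -/
def IsTMinCut {V : Type*} (G : SimpleGraph V) (t : ℕ) (A : Set V) : Prop :=
  IsMinCutSet G A ∧
  {F : Set V | MaxClique G F ∧ A ⊆ F}.ncard = t ∧
  ⋂₀ {F : Set V | MaxClique G F ∧ A ⊆ F} = A ∧
  ∀ F : Set V, MaxClique G F → ¬ A ⊆ F → F ∩ A = ∅

/-- `B` is a branch of the facet `F` in the clique complex of `G`. -/
def IsBranch {V : Type*} (G : SimpleGraph V) (F B : Set V) : Prop :=
  MaxClique G B ∧ B ≠ F ∧ ∀ H : Set V, MaxClique G H → H ≠ F → H ∩ F ⊆ B ∩ F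

/-- `F` is a leaf of the clique complex of `G`. -/
def IsLeafClique {V : Type*} (G : SimpleGraph V) (F : Set V) : Prop :=
  MaxClique G F ∧ ((∀ F' : Set V, MaxClique G F' → F' = F) ∨ ∃ B, IsBranch G F B)

section Aux
variable {V : Type*}

instance ccFinite [Finite V] (G : SimpleGraph V) : Finite G.ConnectedComponent :=
  Quot.finite _

private lemma walk_label {ι : Type*} {G : SimpleGraph V} {f : V → ι}
    (hadj : ∀ a b, G.Adj a b → f a = f b) {v w : V} (p : G.Walk v w) : f v = f w := by
  induction p with
  | nil => rfl
  | cons h _ ih => exact (hadj _ _ h).trans ih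

lemma card_cc_eq {ι : Type*} (G : SimpleGraph V) (f : V → ι)
    (hadj : ∀ a b, G.Adj a b → f a = f b)
    (hsurj : Function.Surjective f)
    (hconn : ∀ a b, f a = f b → G.Reachable a b) :
    Nat.card G.ConnectedComponent = Nat.card ι := by
  apply Nat.card_congr
  refine Equiv.ofBijective (ConnectedComponent.lift f fun v w p _ => walk_label hadj p)
    ⟨?_, ?_⟩
  · refine ConnectedComponent.ind₂ fun a b h => ?_
    exact ConnectedComponent.sound (hconn a b h)
  · intro i
    obtain ⟨a, rfl⟩ := hsurj i
    exact ⟨G.connectedComponentMk a, rfl⟩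

lemma nc_insert_le [Finite V] (H : SimpleGraph V) {s : Set V} {v w : V}
    (hws : w ∈ s) (hadj : H.Adj v w) : nc H (insert v s) ≤ nc H s := by
  classical
  have hsub : s ≤ insert v s := Set.subset_insert v s
  let φ : H.induce s →g H.induce (insert v s) := (H.induceHomOfLE hsub).toHom
  have hsurj : Function.Surjective (ConnectedComponent.map φ) := by
    intro c
    induction c using ConnectedComponent.ind with
    | _ x =>
      rcases x with ⟨x, hx⟩
      rcases Set.mem_insert_iff.mp hx with rfl | hxs
      · refine ⟨(H.induce s).connectedComponentMk ⟨w, hws⟩, ?_⟩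
        rw [ConnectedComponent.map_mk]
        exact ConnectedComponent.sound
          (SimpleGraph.Adj.reachable (by exact hadj.symm :
            (H.induce (insert x s)).Adj ⟨w, hsub hws⟩ ⟨x, hx⟩))
      · exact ⟨(H.induce s).connectedComponentMk ⟨x, hxs⟩, rfl⟩
  exact Nat.card_le_card_of_surjective _ hsurj

lemma nc_connected_univ [Finite V] {H : SimpleGraph V} (hH : H.Connected) :
    nc H Set.univ = 1 := by
  have e := (H.induceUnivIso).connectedComponentEquiv
  rw [nc, Nat.card_congr e]
  haveI := hH.preconnected.subsingleton_connectedComponent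
  haveI : Nonempty H.ConnectedComponent := ⟨H.connectedComponentMk hH.nonempty.some⟩
  exact Nat.card_unique

lemma nc_empty (H : SimpleGraph V) : nc H (∅ : Set V) = 0 := by
  haveI : IsEmpty ((∅ : Set V) : Type _) := by
    constructor; rintro ⟨x, hx⟩; exact hx
  exact Nat.card_of_isEmpty

lemma nc_top [Finite V] {s : Set V} (hs : s.Nonempty) :
    nc (⊤ : SimpleGraph V) s = 1 := by
  haveI : Subsingleton ((⊤ : SimpleGraph V).induce s).ConnectedComponent := by
    constructor
    refine ConnectedComponent.ind₂ fun a b => ?_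
    apply ConnectedComponent.sound
    by_cases h : a = b
    · rw [h]
    · exact SimpleGraph.Adj.reachable (by
        show (a : V) ≠ (b : V)
        exact fun hab => h (Subtype.ext hab))
  haveI : Nonempty ((⊤ : SimpleGraph V).induce s).ConnectedComponent :=
    ⟨_root_.SimpleGraph.connectedComponentMk _ ⟨hs.choose, hs.choose_spec⟩⟩
  exact Nat.card_unique

lemma reachable_eq_of_isolated {G : SimpleGraph V} {x y : V}
    (h : ∀ z, ¬ G.Adj x z) (r : G.Reachable x y) : x = y := by
  obtain ⟨p⟩ := r
  cases p with
  | nil => rfl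
  | cons ha _ => exact absurd ha (h _)

lemma inl_mem_comp {A B : Set V} {v : V} (hv : v ∉ A) :
    Sum.inl v ∈ (Sum.inl '' A ∪ Sum.inr '' B)ᶜ := by simp [hv]

lemma inr_mem_comp {A B : Set V} {v : V} (hv : v ∉ B) :
    Sum.inr v ∈ (Sum.inl '' A ∪ Sum.inr '' B)ᶜ := by simp [hv]

lemma mem_comp_inl {A B : Set V} {v : V} (h : Sum.inl v ∈ (Sum.inl '' A ∪ Sum.inr '' B)ᶜ) :
    v ∉ A := by
  intro hv; exact h (Or.inl ⟨v, hv, rfl⟩)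

lemma mem_comp_inr {A B : Set V} {v : V} (h : Sum.inr v ∈ (Sum.inl '' A ∪ Sum.inr '' B)ᶜ) :
    v ∉ B := by
  intro hv; exact h (Or.inr ⟨v, hv, rfl⟩)

noncomputable def whiskLab (H : SimpleGraph V) (A B : Set V) [DecidablePred (· ∈ A)] :
    ∀ x : V ⊕ V, x ∈ (Sum.inl '' A ∪ Sum.inr '' B)ᶜ →
      (↥(A \ B) ⊕ (H.induce Aᶜ).ConnectedComponent)
  | Sum.inl v, h => Sum.inr ((H.induce Aᶜ).connectedComponentMk ⟨v, mem_comp_inl h⟩)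
  | Sum.inr v, h =>
    if hv : v ∈ A then Sum.inl ⟨v, hv, mem_comp_inr h⟩
    else Sum.inr ((H.induce Aᶜ).connectedComponentMk ⟨v, hv⟩)

lemma whisker_nc [Finite V] (H : SimpleGraph V) (A B : Set V) :
    nc (whiskerGraph H) (Sum.inl '' A ∪ Sum.inr '' B)ᶜ = (A \ B).ncard + nc H Aᶜ := by
  classical
  let φ : H.induce Aᶜ →g (whiskerGraph H).induce (Sum.inl '' A ∪ Sum.inr '' B)ᶜ :=
    ⟨fun v => ⟨Sum.inl v.1, inl_mem_comp v.2⟩, fun h => h⟩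
  have key2 : ∀ (u w : V) (hu : u ∈ Aᶜ) (hw : w ∈ Aᶜ),
      (H.induce Aᶜ).connectedComponentMk ⟨u, hu⟩ =
        (H.induce Aᶜ).connectedComponentMk ⟨w, hw⟩ →
      ((whiskerGraph H).induce (Sum.inl '' A ∪ Sum.inr '' B)ᶜ).Reachable
        ⟨Sum.inl u, inl_mem_comp hu⟩ ⟨Sum.inl w, inl_mem_comp hw⟩ :=
    fun u w hu hw h => (ConnectedComponent.exact h).map φ
  have key := card_cc_eq ((whiskerGraph H).induce (Sum.inl '' A ∪ Sum.inr '' B)ᶜ)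
      (fun x => whiskLab H A B x.1 x.2) ?_ ?_ ?_
  · rw [nc, key, Nat.card_sum, Nat.card_coe_set_eq, nc]
  · rintro ⟨(a | a), ha⟩ ⟨(b | b), hb⟩ hab
    · exact congrArg Sum.inr (ConnectedComponent.sound
        (SimpleGraph.Adj.reachable (by exact hab)))
    · have hab' : a = b := hab
      subst hab'
      simp only [whiskLab]
      rw [dif_neg (mem_comp_inl ha)]
    · have hab' : a = b := hab
      subst hab'
      simp only [whiskLab]
      rw [dif_neg (mem_comp_inl hb)]
    · exact absurd hab (by exact fun h => h)
  · rintro (⟨v, hv⟩ | c)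
    · refine ⟨⟨Sum.inr v, inr_mem_comp hv.2⟩, ?_⟩
      show whiskLab H A B (Sum.inr v) _ = _
      simp only [whiskLab]
      rw [dif_pos hv.1]
    · induction c using ConnectedComponent.ind with
      | _ x =>
        exact ⟨⟨Sum.inl x.1, inl_mem_comp x.2⟩, rfl⟩
  · rintro ⟨(a | a), ha⟩ ⟨(b | b), hb⟩ hfeq
    · simp only [whiskLab, Sum.inr.injEq] at hfeq
      exact key2 a b (mem_comp_inl ha) (mem_comp_inl hb) hfeq
    · by_cases hbA : b ∈ A
      · simp only [whiskLab] at hfeq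
        rw [dif_pos hbA] at hfeq
        exact absurd hfeq (by simp)
      · simp only [whiskLab] at hfeq
        rw [dif_neg hbA] at hfeq
        simp only [Sum.inr.injEq] at hfeq
        refine (key2 a b (mem_comp_inl ha) hbA hfeq).trans ?_
        exact SimpleGraph.Adj.reachable (by exact rfl)
    · by_cases haA : a ∈ A
      · simp only [whiskLab] at hfeq
        rw [dif_pos haA] at hfeq
        exact absurd hfeq (by simp)
      · simp only [whiskLab] at hfeq
        rw [dif_neg haA] at hfeq
        simp only [Sum.inr.injEq] at hfeq
        refine Reachable.trans ?_ (key2 a b haA (mem_comp_inl hb) hfeq)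
        exact SimpleGraph.Adj.reachable (by exact rfl)
    · by_cases haA : a ∈ A <;> by_cases hbA : b ∈ A
      · simp only [whiskLab] at hfeq
        rw [dif_pos haA, dif_pos hbA] at hfeq
        simp only [Sum.inl.injEq, Subtype.mk.injEq] at hfeq
        obtain rfl : a = b := congrArg Subtype.val hfeq
        rfl
      · simp only [whiskLab] at hfeq
        rw [dif_pos haA, dif_neg hbA] at hfeq
        exact absurd hfeq (by simp)
      · simp only [whiskLab] at hfeq
        rw [dif_neg haA, dif_pos hbA] at hfeq
        exact absurd hfeq (by simp)
      · simp only [whiskLab] at hfeq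
        rw [dif_neg haA, dif_neg hbA] at hfeq
        simp only [Sum.inr.injEq] at hfeq
        refine Reachable.trans (SimpleGraph.Adj.reachable (by exact rfl :
            ((whiskerGraph H).induce (Sum.inl '' A ∪ Sum.inr '' B)ᶜ).Adj
              ⟨Sum.inr a, ha⟩ ⟨Sum.inl a, inl_mem_comp haA⟩)) ?_
        refine Reachable.trans (key2 a b haA hbA hfeq) ?_
        exact SimpleGraph.Adj.reachable (by exact rfl)

lemma compl_erase {α : Type*} (s : Set α) (x : α) : (s \ {x})ᶜ = sᶜ ∪ {x} := by
  rw [Set.diff_eq, Set.compl_inter, compl_compl]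

/-- Structure of sets with the cut point property in a whisker graph. -/
lemma whisker_struct [Finite V] (H : SimpleGraph V) (T : Set (V ⊕ V))
    (hcpp : CutPointProperty (whiskerGraph H) T) :
    ∃ A : Set V, T = Sum.inl '' A ∧
      nc (whiskerGraph H) Tᶜ = A.ncard + nc H Aᶜ ∧ T.ncard = A.ncard ∧
      (∀ v ∈ A, nc H (insert v Aᶜ) ≤ nc H Aᶜ) := by
  classical
  set A : Set V := {v | Sum.inl v ∈ T} with hA
  set B : Set V := {v | Sum.inr v ∈ T} with hBdef
  have hTdec : T = Sum.inl '' A ∪ Sum.inr '' B := by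
    ext (v | v) <;> simp [hA, hBdef]
  have hB : B = ∅ := by
    by_contra hB
    obtain ⟨v, hv⟩ := Set.nonempty_iff_ne_empty.mpr hB
    have hiT : Sum.inr v ∈ T := hv
    have hset : Tᶜ ∪ {Sum.inr v} = (Sum.inl '' A ∪ Sum.inr '' (B \ {v}))ᶜ := by
      have h1 : Sum.inl '' A ∪ Sum.inr '' (B \ {v}) =
          (Sum.inl '' A ∪ Sum.inr '' B) \ {Sum.inr v} := by
        ext (w | w) <;> simp [and_comm]
      rw [h1, compl_erase, ← hTdec]
    have hlt := hcpp _ hiT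
    rw [hset, whisker_nc, hTdec, whisker_nc] at hlt
    have hmono : (A \ B).ncard ≤ (A \ (B \ {v})).ncard :=
      Set.ncard_le_ncard (Set.diff_subset_diff_right Set.diff_subset) (Set.toFinite _)
    omega
  have hT : T = Sum.inl '' A := by rw [hTdec, hB]; simp
  have hformula : nc (whiskerGraph H) Tᶜ = A.ncard + nc H Aᶜ := by
    rw [hTdec, hB]
    have := whisker_nc H A (∅ : Set V)
    simpa using this
  refine ⟨A, hT, hformula, ?_, ?_⟩
  · rw [hT, Set.ncard_image_of_injective _ Sum.inl_injective]
  · intro v hvA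
    have hiT : Sum.inl v ∈ T := hvA
    have hset : Tᶜ ∪ {Sum.inl v} = (Sum.inl '' (A \ {v}) ∪ Sum.inr '' (∅ : Set V))ᶜ := by
      rw [Set.image_empty, Set.union_empty,
        Set.image_diff Sum.inl_injective, Set.image_singleton, compl_erase, hT]
    have hlt := hcpp _ hiT
    rw [hset, whisker_nc, hTdec, hB] at hlt
    have hrw : nc (whiskerGraph H) (Sum.inl '' A ∪ Sum.inr '' (∅ : Set V))ᶜ
        = A.ncard + nc H Aᶜ := by simpa using whisker_nc H A (∅ : Set V)
    rw [hrw] at hlt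
    simp only [Set.diff_empty] at hlt
    have hcard : (A \ {v}).ncard + 1 = A.ncard :=
      Set.ncard_diff_singleton_add_one hvA (Set.toFinite _)
    have hins : (A \ {v})ᶜ = insert v Aᶜ := by
      rw [compl_erase, Set.union_singleton]
    rw [hins] at hlt
    omega

end Aux

/-- the whisker graph `W(H)` of a connected graph `H` is unmixed
(Rauf–Rinaldo sense) iff `H` is complete; moreover, if `H` is complete then every nonempty
`T ∈ 𝒞(W(H))` consists of original vertices only, is proper, and satisfies
`c(T) = |T| + 1`. -/
theorem stmt19 {V : Type*} [Fintype V] (H : SimpleGraph V) (hH : H.Connected) :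
    ((∀ T : Set (V ⊕ V), CutPointProperty (whiskerGraph H) T →
        nc (whiskerGraph H) Tᶜ = T.ncard + 1) ↔ H = ⊤) ∧
    (H = ⊤ → ∀ T : Set (V ⊕ V), T.Nonempty → CutPointProperty (whiskerGraph H) T →
      (∃ T₀ : Set V, T₀ ≠ Set.univ ∧ T = Sum.inl '' T₀) ∧
      nc (whiskerGraph H) Tᶜ = T.ncard + 1) := by
    classical
  have part2 : H = ⊤ → ∀ T : Set (V ⊕ V), T.Nonempty →
      CutPointProperty (whiskerGraph H) T →
      (∃ T₀ : Set V, T₀ ≠ Set.univ ∧ T = Sum.inl '' T₀) ∧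
      nc (whiskerGraph H) Tᶜ = T.ncard + 1 := by
    intro htop T hTne hcpp
    obtain ⟨A, hT, hform, hcard, hloc⟩ := whisker_struct H T hcpp
    have hAne : A.Nonempty := by
      obtain ⟨x, hx⟩ := hTne
      rw [hT] at hx
      obtain ⟨v, hv, rfl⟩ := hx
      exact ⟨v, hv⟩
    obtain ⟨v, hv⟩ := hAne
    have h1 := hloc v hv
    rw [htop] at h1
    have hins : nc (⊤ : SimpleGraph V) (insert v Aᶜ) = 1 :=
      nc_top (Set.insert_nonempty v _)
    have hAc : Aᶜ.Nonempty := by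
      rcases Set.eq_empty_or_nonempty Aᶜ with he | hne
      · rw [he] at h1
        rw [nc_empty] at h1
        have h3 : nc (⊤ : SimpleGraph V) (insert v (∅ : Set V)) = 1 :=
          nc_top (Set.insert_nonempty _ _)
        omega
      · exact hne
    have h2 : nc H Aᶜ = 1 := by rw [htop]; exact nc_top hAc
    refine ⟨⟨A, ?_, hT⟩, ?_⟩
    · intro hAu
      rw [hAu, Set.compl_univ] at hAc
      exact Set.not_nonempty_empty hAc
    · rw [hform, h2, hcard]
  refine ⟨⟨?_, ?_⟩, part2⟩
  · intro hU
    by_contra hne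
    have hex : ∃ a b, a ≠ b ∧ ¬ H.Adj a b := by
      by_contra hc
      push_neg at hc
      apply hne
      ext a b
      simp only [top_adj]
      exact ⟨fun h => h.ne, fun h => hc a b h⟩
    obtain ⟨a, b, hab, hnadj⟩ := hex
    set A : Set V := H.neighborSet a with hAdef
    have haA : a ∉ A := fun h => H.irrefl h
    have hbA : b ∉ A := fun h => hnadj h
    have hcpp : CutPointProperty (whiskerGraph H) (Sum.inl '' A) := by
      rintro i hi
      obtain ⟨v, hvA, rfl⟩ := hi
      have hset : (Sum.inl '' A)ᶜ ∪ {Sum.inl v}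
          = (Sum.inl '' (A \ {v}) ∪ Sum.inr '' (∅ : Set V))ᶜ := by
        rw [Set.image_empty, Set.union_empty,
          Set.image_diff Sum.inl_injective, Set.image_singleton, compl_erase]
      have h0 : (Sum.inl '' A)ᶜ = (Sum.inl '' A ∪ Sum.inr '' (∅ : Set V))ᶜ := by
        simp
      rw [hset, h0, whisker_nc, whisker_nc]
      simp only [Set.diff_empty]
      have hcard : (A \ {v}).ncard + 1 = A.ncard :=
        Set.ncard_diff_singleton_add_one hvA (Set.toFinite _)
      have hins : (A \ {v})ᶜ = insert v Aᶜ := by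
        rw [compl_erase, Set.union_singleton]
      rw [hins]
      have hle : nc H (insert v Aᶜ) ≤ nc H Aᶜ :=
        nc_insert_le H haA ((H.mem_neighborSet a v).mp hvA).symm
      omega
    have hU' := hU _ hcpp
    have h0 : (Sum.inl '' A)ᶜ = (Sum.inl '' A ∪ Sum.inr '' (∅ : Set V))ᶜ := by simp
    rw [h0, whisker_nc, Set.ncard_image_of_injective _ Sum.inl_injective] at hU'
    simp only [Set.diff_empty] at hU'
    have hncA : nc H Aᶜ = 1 := by omega
    have hne2 : (H.induce Aᶜ).connectedComponentMk ⟨a, haA⟩ ≠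
        (H.induce Aᶜ).connectedComponentMk ⟨b, hbA⟩ := by
      intro h
      have heq := reachable_eq_of_isolated (x := (⟨a, haA⟩ : ↥Aᶜ)) ?_
        (ConnectedComponent.exact h)
      · exact hab (congrArg Subtype.val heq)
      · rintro ⟨z, hz⟩ hadj
        exact hz hadj
    haveI : Nontrivial (H.induce Aᶜ).ConnectedComponent := ⟨_, _, hne2⟩
    have hlarge := Finite.one_lt_card (α := (H.induce Aᶜ).ConnectedComponent)
    rw [nc] at hncA
    omega
  · intro htop T hcpp
    rcases Set.eq_empty_or_nonempty T with rfl | hTne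
    · have h0 : (∅ : Set (V ⊕ V))ᶜ = (Sum.inl '' (∅ : Set V) ∪ Sum.inr '' (∅ : Set V))ᶜ := by
        simp
      rw [h0, whisker_nc]
      simp [nc_connected_univ hH]
    · exact (part2 htop T hTne hcpp).2
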